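/- arXiv:1612.07591 — 2 statements merged into one kernel-verified Lean document; each statement's English description precedes it below -/
import Mathlib

section
/- The series H(x) = Σ_{n≥0} (-x)^n q^{C(n,2)} / ((q;q)_n (x;q)_n) satisfies the second-order linear q-difference equation (1-x)H(x) - (1-2x)H(xq) + (x²q/(1-xq))·H(xq²) = 0. -/
open PowerSeries

noncomputable section
namespace FC

/-- The field `ℚ(q)` of rational functions in `q`. -/
abbrev K : Type := RatFunc ℚ

/-- The variable `q`. -/
def q : K := RatFunc.X

/-- The q-Pochhammer symbol `(a; q)_n = ∏_{i=0}^{n-1} (1 - a q^i)`. -/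
def poch (a : K) (n : ℕ) : K := ∏ i ∈ Finset.range n, (1 - a * q ^ i)

/-- The power series `(x q^s; q)_n = ∏_{i=0}^{n-1} (1 - q^{s+i} x)` in the variable `x`. -/
def pochX (s n : ℕ) : PowerSeries K :=
  ∏ i ∈ Finset.range n, (1 - PowerSeries.C (q ^ (s + i)) * PowerSeries.X)

/-- `J(x) = Σ_{n≥0} (-x)^n q^{C(n,2)} / ((q;q)_n (xq;q)_n)`, defined coefficientwise:
the coefficient of `x^N` is `Σ_{n=0}^{N} (-1)^n q^{C(n,2)}/(q;q)_n · [x^{N-n}] (xq;q)_n⁻¹`. -/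
def J : PowerSeries K :=
  PowerSeries.mk fun N => ∑ n ∈ Finset.range (N + 1),
    ((-1 : K) ^ n * q ^ n.choose 2 / poch q n) * PowerSeries.coeff (N - n) (pochX 1 n)⁻¹

/-- `H(x) = Σ_{n≥0} (-x)^n q^{C(n,2)} / ((q;q)_n (x;q)_n)`. -/
def H : PowerSeries K :=
  PowerSeries.mk fun N => ∑ n ∈ Finset.range (N + 1),
    ((-1 : K) ^ n * q ^ n.choose 2 / poch q n) * PowerSeries.coeff (N - n) (pochX 0 n)⁻¹

/-- `K(x) = Σ_{n≥0} (x^n q^{n(n+1)/2} / (xq;q)_n) · Σ_{k=0}^n (-1)^k/(q;q)_k`. -/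
def Kq : PowerSeries K :=
  PowerSeries.mk fun N => ∑ n ∈ Finset.range (N + 1),
    (q ^ (n * (n + 1) / 2) * ∑ k ∈ Finset.range (n + 1), (-1 : K) ^ k / poch q k) *
      PowerSeries.coeff (N - n) (pochX 1 n)⁻¹

/-! ### Auxiliary scalar lemmas -/

lemma one_sub_q_pow_ne_zero {i : ℕ} (hi : i ≠ 0) : (1 : K) - q ^ i ≠ 0 := by
  intro h
  have h2 : (q : K) ^ i = 1 := by linear_combination -h
  have h3 : (algebraMap (Polynomial ℚ) K) (Polynomial.X ^ i) = (algebraMap (Polynomial ℚ) K) 1 := by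
    rw [map_pow, map_one, RatFunc.algebraMap_X]
    exact h2
  have h4 : (Polynomial.X : Polynomial ℚ) ^ i = 1 := RatFunc.algebraMap_injective ℚ h3
  have h5 := congrArg Polynomial.natDegree h4
  rw [Polynomial.natDegree_X_pow, Polynomial.natDegree_one] at h5
  exact hi h5

lemma poch_q_ne_zero (n : ℕ) : poch q n ≠ 0 := by
  rw [poch]
  refine Finset.prod_ne_zero_iff.mpr fun i _ => ?_
  rw [← pow_succ']
  exact one_sub_q_pow_ne_zero (Nat.succ_ne_zero i)

/-- The scalar coefficient `c n = (-1)^n q^{C(n,2)} / (q;q)_n`. -/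
def c (n : ℕ) : K := (-1 : K) ^ n * q ^ n.choose 2 / poch q n

lemma poch_q_succ (n : ℕ) : poch q (n + 1) = poch q n * (1 - q ^ (n + 1)) := by
  rw [poch, Finset.prod_range_succ, ← poch, ← pow_succ']

lemma c_rec (n : ℕ) : c (n + 1) * (1 - q ^ (n + 1)) = -(c n * q ^ n) := by
  have h2 : (n + 1).choose 2 = n + n.choose 2 := by
    rw [Nat.choose_succ_succ, Nat.choose_one_right]
  rw [c, c, poch_q_succ, h2, ← div_div,
    div_mul_cancel₀ _ (one_sub_q_pow_ne_zero (Nat.succ_ne_zero n)), pow_add, pow_succ]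
  ring

/-! ### pochX lemmas -/

lemma pochX_zero (s : ℕ) : pochX s 0 = 1 := Finset.prod_range_zero _

lemma pochX_succ (s n : ℕ) :
    pochX s (n + 1) = pochX s n * (1 - C (q ^ (s + n)) * X) := Finset.prod_range_succ _ _

lemma pochX_succ' (s n : ℕ) :
    pochX s (n + 1) = (1 - C (q ^ s) * X) * pochX (s + 1) n := by
  rw [pochX, Finset.prod_range_succ', Nat.add_zero, mul_comm]
  congr 1
  rw [pochX]
  exact Finset.prod_congr rfl fun i _ => by rw [show s + (i + 1) = s + 1 + i by omega]

lemma constantCoeff_pochX (s n : ℕ) : constantCoeff (pochX s n) ≠ 0 := by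
  rw [pochX, map_prod]
  simp

lemma rescale_C' (a r : K) : rescale a (C r) = C r := by
  ext N
  rw [coeff_rescale]
  simp only [coeff_C]
  split
  · next h => subst h; rw [pow_zero, one_mul]
  · rw [mul_zero]

lemma constantCoeff_rescale (a : K) (f : PowerSeries K) :
    constantCoeff (rescale a f) = constantCoeff f := by
  rw [← coeff_zero_eq_constantCoeff_apply, ← coeff_zero_eq_constantCoeff_apply,
    coeff_rescale, pow_zero, one_mul]

lemma rescale_inv (a : K) (f : PowerSeries K) (hf : constantCoeff f ≠ 0) :
    rescale a f⁻¹ = (rescale a f)⁻¹ := by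
  rw [PowerSeries.eq_inv_iff_mul_eq_one, ← map_mul, PowerSeries.inv_mul_cancel f hf, map_one]
  rw [constantCoeff_rescale]
  exact hf

lemma rescale_pochX (k s n : ℕ) : rescale (q ^ k) (pochX s n) = pochX (s + k) n := by
  rw [pochX, map_prod, pochX]
  refine Finset.prod_congr rfl fun i _ => ?_
  rw [map_sub, map_one, map_mul, rescale_C', rescale_X, ← mul_assoc, ← map_mul, ← pow_add]
  rw [show s + i + k = s + k + i by omega]

lemma inv_eq_mul_inv' (f g h : PowerSeries K) (hf : constantCoeff f ≠ 0)
    (hg : constantCoeff g ≠ 0) (hfg : f * g = h) : f⁻¹ = g * h⁻¹ := by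
  subst hfg
  rw [PowerSeries.mul_inv_rev, ← mul_assoc, PowerSeries.mul_inv_cancel g hg, one_mul]

/-! ### hsum: formal sums given coefficientwise -/

/-- The formal sum of a family of power series, where only terms `n ≤ N` contribute to the
coefficient of `X^N`. -/
def hsum (A : ℕ → PowerSeries K) : PowerSeries K :=
  PowerSeries.mk fun N => ∑ n ∈ Finset.range (N + 1), coeff N (A n)

lemma coeff_hsum (A : ℕ → PowerSeries K) (N : ℕ) :
    coeff N (hsum A) = ∑ n ∈ Finset.range (N + 1), coeff N (A n) := coeff_mk _ _

lemma coeff_X_pow_mul_of_lt (g : PowerSeries K) {n N : ℕ} (h : N < n) :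
    coeff N (X ^ n * g) = 0 := by
  rw [PowerSeries.coeff_X_pow_mul' g n N, if_neg (by omega)]

lemma mul_hsum (f : PowerSeries K) (A : ℕ → PowerSeries K)
    (hA : ∀ n N, N < n → coeff N (A n) = 0) :
    f * hsum A = hsum fun n => f * A n := by
  ext N
  rw [coeff_hsum, PowerSeries.coeff_mul]
  have key : ∀ p ∈ Finset.HasAntidiagonal.antidiagonal N,
      coeff p.1 f * coeff p.2 (hsum A)
        = ∑ n ∈ Finset.range (N + 1), coeff p.1 f * coeff p.2 (A n) := by
    intro p hp
    have hp2 : p.2 ≤ N := by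
      have := Finset.HasAntidiagonal.mem_antidiagonal.mp hp
      omega
    rw [coeff_hsum, Finset.mul_sum]
    refine Finset.sum_subset ?_ ?_
    · intro m hm
      rw [Finset.mem_range] at hm ⊢
      omega
    · intro m _ hm
      rw [Finset.mem_range, not_lt] at hm
      rw [hA m p.2 (by omega), mul_zero]
  rw [Finset.sum_congr rfl key, Finset.sum_comm]
  exact Finset.sum_congr rfl fun n _ => (PowerSeries.coeff_mul _ _ _).symm

lemma rescale_hsum (a : K) (A : ℕ → PowerSeries K) :
    rescale a (hsum A) = hsum fun n => rescale a (A n) := by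
  ext N
  rw [coeff_rescale, coeff_hsum, coeff_hsum, Finset.mul_sum]
  exact Finset.sum_congr rfl fun n _ => (coeff_rescale _ _ _).symm

lemma hsum_combine (A B C' : ℕ → PowerSeries K) :
    hsum A - hsum B + hsum C' = hsum fun n => A n - B n + C' n := by
  ext N
  simp only [map_add, map_sub, coeff_hsum, Finset.sum_add_distrib, Finset.sum_sub_distrib]

lemma hsum_telescope (D : ℕ → PowerSeries K) (h0 : D 0 = 0)
    (hD : ∀ n N, N < n → coeff N (D n) = 0) :
    hsum (fun n => D n - D (n + 1)) = 0 := by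
  ext N
  rw [coeff_hsum, map_zero]
  have : ∀ n ∈ Finset.range (N + 1),
      coeff N (D n - D (n + 1)) = (fun m => coeff N (D m)) n - (fun m => coeff N (D m)) (n+1) := by
    intro n _
    rw [map_sub]
  rw [Finset.sum_congr rfl this, Finset.sum_range_sub' (fun m => coeff N (D m)) (N + 1)]
  rw [h0, map_zero, hD (N + 1) N (by omega), sub_zero]

/-! ### The term families -/

def T (n : ℕ) : PowerSeries K := X ^ n * (C (c n) * (pochX 0 n)⁻¹)

def T' (n : ℕ) : PowerSeries K := X ^ n * (C (c n * q ^ n) * (pochX 1 n)⁻¹)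

def T'' (n : ℕ) : PowerSeries K := X ^ n * (C (c n * (q ^ 2) ^ n) * (pochX 2 n)⁻¹)

def D (n : ℕ) : PowerSeries K := X ^ n * (C (c n * (1 - q ^ n)) * (pochX 1 n)⁻¹)

lemma hT : ∀ n N, N < n → coeff N (T n) = 0 := fun n N h => by
  rw [T]; exact coeff_X_pow_mul_of_lt _ h

lemma hT' : ∀ n N, N < n → coeff N (T' n) = 0 := fun n N h => by
  rw [T']; exact coeff_X_pow_mul_of_lt _ h

lemma hT'' : ∀ n N, N < n → coeff N (T'' n) = 0 := fun n N h => by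
  rw [T'']; exact coeff_X_pow_mul_of_lt _ h

lemma hD : ∀ n N, N < n → coeff N (D n) = 0 := fun n N h => by
  rw [D]; exact coeff_X_pow_mul_of_lt _ h

lemma D_zero : D 0 = 0 := by
  simp [D]

lemma H_eq : H = hsum T := by
  ext N
  rw [H, coeff_mk, coeff_hsum]
  refine Finset.sum_congr rfl fun n hn => ?_
  have hn' : n ≤ N := by
    have := Finset.mem_range.mp hn; omega
  rw [T, PowerSeries.coeff_X_pow_mul' _ n N, if_pos hn', coeff_C_mul, c]

lemma rescale_T (n : ℕ) : rescale q (T n) = T' n := by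
  have h1 : rescale (q ^ 1) (pochX 0 n) = pochX 1 n := rescale_pochX 1 0 n
  rw [pow_one] at h1
  rw [T, T', map_mul, map_mul, map_pow, rescale_X, rescale_C',
    rescale_inv q _ (constantCoeff_pochX 0 n), h1]
  simp only [map_mul, map_pow]
  ring

lemma rescale_T'' (n : ℕ) : rescale (q ^ 2) (T n) = T'' n := by
  rw [T, T'', map_mul, map_mul, map_pow, rescale_X, rescale_C',
    rescale_inv (q ^ 2) _ (constantCoeff_pochX 0 n), rescale_pochX 2 0 n]
  simp only [map_mul, map_pow]
  ring

/-! ### The key termwise identity -/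

lemma pochX_one_succ_inv (n : ℕ) :
    (pochX 1 (n + 1))⁻¹ = (pochX 2 n)⁻¹ * (1 - C q * X)⁻¹ := by
  rw [pochX_succ' 1 n, PowerSeries.mul_inv_rev, pow_one]

lemma term_id (n : ℕ) :
    (1 - X) * T n - (1 - 2 * X) * T' n
      + X ^ 2 * C q * (1 - C q * X)⁻¹ * T'' n = D n - D (n + 1) := by
  set W : PowerSeries K := (pochX 0 (n + 2))⁻¹ with hW
  have hA : (pochX 0 n)⁻¹ = ((1 - C (q ^ n) * X) * (1 - C (q ^ (n + 1)) * X)) * W := by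
    refine inv_eq_mul_inv' _ _ _ (constantCoeff_pochX 0 n) ?_ ?_
    · simp only [map_mul, map_sub, map_one, constantCoeff_X, mul_zero, sub_zero, one_mul]
      norm_num
    · rw [pochX_succ 0 (n + 1), pochX_succ 0 n, Nat.zero_add, Nat.zero_add]
      ring
  have hB : (pochX 1 n)⁻¹ = ((1 - X) * (1 - C (q ^ (n + 1)) * X)) * W := by
    refine inv_eq_mul_inv' _ _ _ (constantCoeff_pochX 1 n) ?_ ?_
    · simp only [map_mul, map_sub, map_one, constantCoeff_X, mul_zero, sub_zero, one_mul]
      norm_num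
    · rw [pochX_succ' 0 (n + 1), pochX_succ 1 n, pow_zero, map_one]
      ring
  have hC : (pochX 1 (n + 1))⁻¹ = (1 - X) * W := by
    refine inv_eq_mul_inv' _ _ _ (constantCoeff_pochX 1 (n + 1)) ?_ ?_
    · simp only [map_sub, map_one, constantCoeff_X, sub_zero]
      norm_num
    · rw [pochX_succ' 0 (n + 1), pow_zero, map_one]
      ring
  have h3 : X ^ 2 * C q * (1 - C q * X)⁻¹ * T'' n
      = X ^ (n + 2) * (C (q * (c n * (q ^ 2) ^ n)) * (pochX 1 (n + 1))⁻¹) := by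
    rw [T'', pochX_one_succ_inv]
    simp only [map_mul, map_pow]
    ring
  rw [h3, T, T', D, D, c_rec, hA, hB, hC]
  simp only [map_mul, map_sub, map_one, map_pow, map_neg]
  ring

/-- `(1-x)H(x) - (1-2x)H(xq) + (x²q/(1-xq))·H(xq²) = 0`. -/
theorem stmt3 :
    (1 - PowerSeries.X) * H - (1 - 2 * PowerSeries.X) * rescale q H
      + PowerSeries.X ^ 2 * PowerSeries.C q *
          (1 - PowerSeries.C q * PowerSeries.X)⁻¹ * rescale (q ^ 2) H = 0 := by
  have e2 : rescale q H = hsum T' := by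
    rw [H_eq, rescale_hsum]
    exact congrArg hsum (funext rescale_T)
  have e3 : rescale (q ^ 2) H = hsum T'' := by
    rw [H_eq, rescale_hsum]
    exact congrArg hsum (funext rescale_T'')
  rw [e2, e3, H_eq, mul_hsum _ T hT, mul_hsum _ T' hT',
    mul_hsum (X ^ 2 * C q * (1 - C q * X)⁻¹) T'' hT'', hsum_combine]
  rw [congrArg hsum (funext term_id)]
  exact hsum_telescope D D_zero hD

end FC
end
end

section
/- The series K-cal(x) = Σ_{n≥0} x^n q^{n(n+1)/2} Σ_{k=0}^{⌊n/2⌋} (-1)^k/(q²;q²)_k satisfies the third-order linear q-difference equation K-cal(x) - (1+xq)·K-cal(xq) + xq²(1+xq)·K-cal(xq²) - x³q⁶·K-cal(xq³) = 0. -/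
open PowerSeries

noncomputable section
namespace FC

/-- `(q²;q²)_m = ∏_{i=1}^{m} (1 - q^{2i})`. -/
def poch2 (m : ℕ) : K := ∏ i ∈ Finset.range m, (1 - q ^ (2 * (i + 1)))

/-- `𝒥(x) = Σ_{n≥0} (-1)^{⌈n/2⌉} x^n q^{C(n,2)} / (q²;q²)_{⌊n/2⌋}`. -/
def Jcal : PowerSeries K :=
  PowerSeries.mk fun n => (-1 : K) ^ ((n + 1) / 2) * q ^ n.choose 2 / poch2 (n / 2)

/-- `𝒦(x) = Σ_{n≥0} x^n q^{n(n+1)/2} Σ_{k=0}^{⌊n/2⌋} (-1)^k/(q²;q²)_k`. -/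
def Kcal : PowerSeries K :=
  PowerSeries.mk fun n =>
    q ^ (n * (n + 1) / 2) * ∑ k ∈ Finset.range (n / 2 + 1), (-1 : K) ^ k / poch2 k

lemma q_pow_ne_one (k : ℕ) (hk : k ≠ 0) : q ^ k ≠ 1 := by
  intro h
  have : (Polynomial.X : Polynomial ℚ) ^ k = 1 := by
    apply RatFunc.algebraMap_injective ℚ
    simpa [q, RatFunc.algebraMap_X, map_pow] using h
  have := congrArg Polynomial.natDegree this
  simp [Polynomial.natDegree_X_pow] at this
  exact hk this

lemma poch2_ne_zero (m : ℕ) : poch2 m ≠ 0 := by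
  unfold poch2
  apply Finset.prod_ne_zero_iff.mpr
  intro i _
  intro h
  exact q_pow_ne_one (2 * (i + 1)) (by omega) (by linear_combination -h)

/-- The partial sums. -/
def S (m : ℕ) : K := ∑ k ∈ Finset.range (m + 1), (-1 : K) ^ k / poch2 k

lemma S_succ (m : ℕ) : S (m + 1) = S m + (-1) ^ (m + 1) / poch2 (m + 1) := by
  simp [S, Finset.sum_range_succ]

lemma poch2_succ (m : ℕ) : poch2 (m + 1) = poch2 m * (1 - q ^ (2 * (m + 1))) := by
  simp [poch2, Finset.prod_range_succ]

lemma S_zero : S 0 = 1 := by simp [S, poch2]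

lemma Skey (m : ℕ) :
    S (m + 2) * (1 - q ^ (2 * (m + 2))) - S (m + 1) * (1 - q ^ (2 * (m + 2)))
      + S (m + 1) - S m = 0 := by
  have h1 : S (m + 2) - S (m + 1) = (-1) ^ (m + 2) / poch2 (m + 2) := by
    rw [show m + 2 = m + 1 + 1 from rfl, S_succ]; ring
  have h2 : S (m + 1) - S m = (-1) ^ (m + 1) / poch2 (m + 1) := by
    rw [S_succ]; ring
  have hps : poch2 (m + 2) = poch2 (m + 1) * (1 - q ^ (2 * (m + 2))) := by
    rw [show m + 2 = m + 1 + 1 from rfl, poch2_succ]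
  have hp1 : poch2 (m + 1) ≠ 0 := poch2_ne_zero (m + 1)
  have hp2 : poch2 (m + 2) ≠ 0 := poch2_ne_zero (m + 2)
  have ht : (1 : K) - q ^ (2 * (m + 2)) ≠ 0 := by
    intro h
    exact q_pow_ne_one (2 * (m + 2)) (by omega) (by linear_combination -h)
  have key : (S (m + 2) - S (m + 1)) * (1 - q ^ (2 * (m + 2))) + (S (m + 1) - S m) = 0 := by
    rw [h1, h2, hps]
    field_simp
    ring
  linear_combination key

lemma Tdiv (a b : ℕ) (h : a * (a + 1) = 2 * b) : a * (a + 1) / 2 = b := by omega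

lemma Skey0 : S 1 * (1 - q ^ 2) - S 0 * (1 - q ^ 2) + S 0 = 0 := by
  have h2 : (1 : K) - q ^ 2 ≠ 0 := by
    intro h
    exact q_pow_ne_one 2 (by omega) (by linear_combination -h)
  have hp1 : poch2 1 = 1 - q ^ 2 := by
    simp [poch2_succ, poch2]
  rw [S_succ, S_zero, hp1]
  field_simp
  ring

/-- `𝒦(x) - (1+xq)·𝒦(xq) + xq²(1+xq)·𝒦(xq²) - x³q⁶·𝒦(xq³) = 0`. -/
theorem stmt11 :
    Kcal - (1 + PowerSeries.C (R := K) q * PowerSeries.X) * rescale q Kcal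
      + PowerSeries.X * PowerSeries.C (R := K) (q ^ 2) *
          (1 + PowerSeries.C (R := K) q * PowerSeries.X) * rescale (q ^ 2) Kcal
      - PowerSeries.X ^ 3 * PowerSeries.C (R := K) (q ^ 6) * rescale (q ^ 3) Kcal = 0 := by
  have hC3 : PowerSeries.C (R := K) (q ^ 3) = PowerSeries.C (R := K) (q ^ 2) * PowerSeries.C (R := K) q := by
    rw [← map_mul, pow_succ]
  have hL :
      Kcal - (1 + PowerSeries.C (R := K) q * PowerSeries.X) * rescale q Kcal
      + PowerSeries.X * PowerSeries.C (R := K) (q ^ 2) *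
          (1 + PowerSeries.C (R := K) q * PowerSeries.X) * rescale (q ^ 2) Kcal
      - PowerSeries.X ^ 3 * PowerSeries.C (R := K) (q ^ 6) * rescale (q ^ 3) Kcal
      = Kcal - rescale q Kcal - PowerSeries.C (R := K) q * (PowerSeries.X ^ 1 * rescale q Kcal)
        + PowerSeries.C (R := K) (q ^ 2) * (PowerSeries.X ^ 1 * rescale (q ^ 2) Kcal)
        + PowerSeries.C (R := K) (q ^ 3) * (PowerSeries.X ^ 2 * rescale (q ^ 2) Kcal)
        - PowerSeries.C (R := K) (q ^ 6) * (PowerSeries.X ^ 3 * rescale (q ^ 3) Kcal) := by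
    rw [hC3]
    ring
  rw [hL]
  ext N
  simp only [map_sub, map_add, coeff_C_mul, map_zero, coeff_X_pow_mul', coeff_rescale]
  have hp0 : poch2 0 = 1 := by simp [poch2]
  rcases N with _ | _ | _ | n
  · norm_num
  · norm_num [Kcal, coeff_mk, hp0]
    ring
  · norm_num [Kcal, coeff_mk, hp0]
    have h0 := Skey0
    rw [S_zero] at h0
    have hs1 : S 1 = ∑ k ∈ Finset.range 2, (-1 : K) ^ k / poch2 k := rfl
    rw [hs1] at h0
    linear_combination q ^ 3 * h0
  · have i1 := show (1:ℕ) ≤ n+1+1+1 by omega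
    have i2 := show (2:ℕ) ≤ n+1+1+1 by omega
    have i3 := show (3:ℕ) ≤ n+1+1+1 by omega
    rw [if_pos i1, if_pos i1, if_pos i2, if_pos i3]
    simp only [Kcal, coeff_mk,
      show n+1+1+1-1 = n+1+1 from rfl, show n+1+1+1-2 = n+1 from rfl,
      show n+1+1+1-3 = n from rfl]
    rcases Nat.even_or_odd n with ⟨m, hm⟩ | ⟨m, hm⟩ <;> subst hm
    · rw [show (m+m+1+1+1)*(m+m+1+1+1+1)/2 = (m+m+3)*(m+2) from Tdiv _ _ (by ring),
        show (m+m+1+1)*(m+m+1+1+1)/2 = (m+1)*(m+m+3) from Tdiv _ _ (by ring),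
        show (m+m+1)*(m+m+1+1)/2 = (m+m+1)*(m+1) from Tdiv _ _ (by ring),
        show (m+m)*(m+m+1)/2 = m*(m+m+1) from Tdiv _ _ (by ring),
        show (m+m+1+1+1)/2 = m+1 from by omega,
        show (m+m+1+1)/2 = m+1 from by omega,
        show (m+m+1)/2 = m from by omega,
        show (m+m)/2 = m from by omega]
      ring
    · rw [show (2*m+1+1+1+1)*(2*m+1+1+1+1+1)/2 = (m+2)*(2*m+5) from Tdiv _ _ (by ring),
        show (2*m+1+1+1)*(2*m+1+1+1+1)/2 = (2*m+3)*(m+2) from Tdiv _ _ (by ring),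
        show (2*m+1+1)*(2*m+1+1+1)/2 = (m+1)*(2*m+3) from Tdiv _ _ (by ring),
        show (2*m+1)*(2*m+1+1)/2 = (2*m+1)*(m+1) from Tdiv _ _ (by ring),
        show (2*m+1+1+1+1)/2 = m+2 from by omega,
        show (2*m+1+1+1)/2 = m+1 from by omega,
        show (2*m+1+1)/2 = m+1 from by omega,
        show (2*m+1)/2 = m from by omega]
      have hs2 : ∑ k ∈ Finset.range (m+2+1), (-1 : K) ^ k / poch2 k = S (m+2) := rfl
      have hs1 : ∑ k ∈ Finset.range (m+1+1), (-1 : K) ^ k / poch2 k = S (m+1) := rfl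
      have hs0 : ∑ k ∈ Finset.range (m+1), (-1 : K) ^ k / poch2 k = S m := rfl
      rw [hs2, hs1, hs0]
      linear_combination q ^ ((m+2)*(2*m+5)) * Skey m

end FC
end
end
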